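/- Let M, N be 2×2 complex matrices such that M, N, and MN each have two distinct eigenvalues, and 1 is an eigenvalue of each of M, N, and MN. Then M, N, and MN have a common eigenvector. -/

import Mathlib

open Matrix

/-- An eigenvector of a matrix. -/
def HasEigenPair (A : Matrix (Fin 2) (Fin 2) ℂ) (μ : ℂ) (v : Fin 2 → ℂ) : Prop :=
  v ≠ 0 ∧ A.mulVec v = μ • v

def HasEigenvalue' (A : Matrix (Fin 2) (Fin 2) ℂ) (μ : ℂ) : Prop :=
  ∃ v, HasEigenPair A μ v

def HasTwoDistinctEigenvalues (A : Matrix (Fin 2) (Fin 2) ℂ) : Prop :=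
  ∃ μ₁ μ₂ : ℂ, μ₁ ≠ μ₂ ∧ HasEigenvalue' A μ₁ ∧ HasEigenvalue' A μ₂

lemma eig_det (A : Matrix (Fin 2) (Fin 2) ℂ) (μ : ℂ) (h : HasEigenvalue' A μ) :
    (A - μ • 1).det = 0 := by
  obtain ⟨v, hv, hAv⟩ := h
  rw [← Matrix.exists_mulVec_eq_zero_iff]
  refine ⟨v, hv, ?_⟩
  rw [sub_mulVec, hAv, smul_mulVec, one_mulVec, sub_self]

lemma eig_quad (A : Matrix (Fin 2) (Fin 2) ℂ) (μ : ℂ) (h : HasEigenvalue' A μ) :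
    μ ^ 2 - A.trace * μ + A.det = 0 := by
  have := eig_det A μ h
  rw [Matrix.det_fin_two] at this
  rw [Matrix.det_fin_two, Matrix.trace_fin_two]
  simp only [Matrix.sub_apply, Matrix.smul_apply, Matrix.one_apply, smul_eq_mul] at this ⊢
  norm_num at this
  linear_combination this

lemma trace_eq (A : Matrix (Fin 2) (Fin 2) ℂ) (h : HasEigenvalue' A 1) :
    A.trace = 1 + A.det := by
  have := eig_quad A 1 h
  linear_combination -this

lemma det_ne_one (A : Matrix (Fin 2) (Fin 2) ℂ) (h1 : HasEigenvalue' A 1)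
    (h2 : HasTwoDistinctEigenvalues A) : A.det ≠ 1 := by
  intro hd
  obtain ⟨μ₁, μ₂, hne, e1, e2⟩ := h2
  have q1 := eig_quad A μ₁ e1
  have q2 := eig_quad A μ₂ e2
  rw [trace_eq A h1, hd] at q1 q2
  have h1' : (μ₁ - 1) ^ 2 = 0 := by linear_combination q1
  have h2' : (μ₂ - 1) ^ 2 = 0 := by linear_combination q2
  rw [pow_eq_zero_iff (by norm_num), sub_eq_zero] at h1' h2'
  exact hne (h1'.trans h2'.symm)

theorem stmt_0 (M N : Matrix (Fin 2) (Fin 2) ℂ)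
    (hM : HasTwoDistinctEigenvalues M) (hN : HasTwoDistinctEigenvalues N)
    (hMN : HasTwoDistinctEigenvalues (M * N))
    (hM1 : HasEigenvalue' M 1) (hN1 : HasEigenvalue' N 1)
    (hMN1 : HasEigenvalue' (M * N) 1) :
    ∃ v : Fin 2 → ℂ, v ≠ 0 ∧ (∃ μ : ℂ, M.mulVec v = μ • v) ∧ (∃ μ : ℂ, N.mulVec v = μ • v) ∧
      (∃ μ : ℂ, (M * N).mulVec v = μ • v) := by
  obtain ⟨u, hu0, hu⟩ := hM1
  obtain ⟨w, hw0, hw⟩ := hN1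
  rw [one_smul] at hu hw
  by_cases hD : u 0 * w 1 - u 1 * w 0 = 0
  · -- u and w are parallel: u is a common eigenvector
    have hcu : ∃ c : ℂ, w = c • u := by
      by_cases h0 : u 0 ≠ 0
      · refine ⟨w 0 / u 0, funext fun i => ?_⟩
        fin_cases i
        · show w 0 = w 0 / u 0 * u 0
          field_simp
        · show w 1 = w 0 / u 0 * u 1
          field_simp
          linear_combination hD
      · push_neg at h0
        have h1 : u 1 ≠ 0 := by
          intro h1
          exact hu0 (funext fun i => by fin_cases i <;> simpa [h0, h1])
        refine ⟨w 1 / u 1, funext fun i => ?_⟩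
        fin_cases i
        · show w 0 = w 1 / u 1 * u 0
          field_simp
          linear_combination -hD
        · show w 1 = w 1 / u 1 * u 1
          field_simp
    obtain ⟨c, hc⟩ := hcu
    have hcne : c ≠ 0 := by
      rintro rfl
      rw [zero_smul] at hc
      exact hw0 hc
    have hNu : N.mulVec u = u := by
      have h := hw
      rw [hc, mulVec_smul] at h
      exact smul_right_injective _ hcne h
    refine ⟨u, hu0, ⟨1, by simpa using hu⟩, ⟨1, by simpa using hNu⟩, ⟨1, ?_⟩⟩
    rw [← mulVec_mulVec, hNu, hu, one_smul]
  · -- independent case: change of basis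
    set a := M.det with ha_def
    set b := N.det with hb_def
    have ha : a ≠ 1 := det_ne_one M ⟨u, hu0, by simpa using hu⟩ hM
    have hb : b ≠ 1 := det_ne_one N ⟨w, hw0, by simpa using hw⟩ hN
    have hab : a * b ≠ 1 := by
      have := det_ne_one (M * N) hMN1 hMN
      rwa [Matrix.det_mul] at this
    set P : Matrix (Fin 2) (Fin 2) ℂ := !![u 0, w 0; u 1, w 1] with hP_def
    have hPdet : P.det ≠ 0 := by
      rw [hP_def, Matrix.det_fin_two_of]
      intro h; exact hD (by linear_combination h)
    have hPu : IsUnit P.det := isUnit_iff_ne_zero.mpr hPdet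
    have hPP : P * P⁻¹ = 1 := Matrix.mul_nonsing_inv P hPu
    have hPP' : P⁻¹ * P = 1 := Matrix.nonsing_inv_mul P hPu
    set M' := P⁻¹ * M * P with hM'_def
    set N' := P⁻¹ * N * P with hN'_def
    have hMP : M * P = P * M' := by
      rw [hM'_def, ← mul_assoc, ← mul_assoc, hPP, one_mul]
    have hNP : N * P = P * N' := by
      rw [hN'_def, ← mul_assoc, ← mul_assoc, hPP, one_mul]
    have hPe0 : P.mulVec ![1, 0] = u := by
      funext i; fin_cases i <;> simp [hP_def, mulVec, dotProduct, Fin.sum_univ_two]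
    have hPe1 : P.mulVec ![0, 1] = w := by
      funext i; fin_cases i <;> simp [hP_def, mulVec, dotProduct, Fin.sum_univ_two]
    have hM'e : M'.mulVec ![1, 0] = ![1, 0] := by
      rw [hM'_def, ← mulVec_mulVec, ← mulVec_mulVec, hPe0, hu, ← hPe0,
        mulVec_mulVec, hPP', one_mulVec]
    have hN'e : N'.mulVec ![0, 1] = ![0, 1] := by
      rw [hN'_def, ← mulVec_mulVec, ← mulVec_mulVec, hPe1, hw, ← hPe1,
        mulVec_mulVec, hPP', one_mulVec]
    have hM'00 : M' 0 0 = 1 := by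
      have := congrFun hM'e 0
      simpa [mulVec, dotProduct, Fin.sum_univ_two] using this
    have hM'10 : M' 1 0 = 0 := by
      have := congrFun hM'e 1
      simpa [mulVec, dotProduct, Fin.sum_univ_two] using this
    have hN'01 : N' 0 1 = 0 := by
      have := congrFun hN'e 0
      simpa [mulVec, dotProduct, Fin.sum_univ_two] using this
    have hN'11 : N' 1 1 = 1 := by
      have := congrFun hN'e 1
      simpa [mulVec, dotProduct, Fin.sum_univ_two] using this
    have htrM' : M'.trace = 1 + a := by
      rw [hM'_def, Matrix.trace_mul_comm, ← mul_assoc, hPP, one_mul]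
      exact trace_eq M ⟨u, hu0, by simpa using hu⟩
    have htrN' : N'.trace = 1 + b := by
      rw [hN'_def, Matrix.trace_mul_comm, ← mul_assoc, hPP, one_mul]
      exact trace_eq N ⟨w, hw0, by simpa using hw⟩
    have hM'11 : M' 1 1 = a := by
      rw [Matrix.trace_fin_two, hM'00] at htrM'
      linear_combination htrM'
    have hN'00 : N' 0 0 = b := by
      rw [Matrix.trace_fin_two, hN'11] at htrN'
      linear_combination htrN'
    set m := M' 0 1 with hm_def
    set n := N' 1 0 with hn_def
    have hMN'eq : M' * N' = P⁻¹ * (M * N) * P := by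
      rw [hM'_def, mul_assoc (P⁻¹ * M) P N', ← hNP, ← mul_assoc, mul_assoc P⁻¹ M N]
    have htrMN' : (M' * N').trace = 1 + a * b := by
      rw [hMN'eq, Matrix.trace_mul_comm, ← mul_assoc, hPP, one_mul]
      have := trace_eq (M * N) hMN1
      rwa [Matrix.det_mul] at this
    have hmn : m * n = (a - 1) * (b - 1) := by
      rw [Matrix.trace_fin_two, Matrix.mul_apply, Matrix.mul_apply,
        Fin.sum_univ_two, Fin.sum_univ_two, hM'00, hM'10, hM'11, hN'00, hN'01, hN'11]
        at htrMN'
      linear_combination htrMN'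
    have hm : m ≠ 0 := by
      intro h
      rw [h, zero_mul] at hmn
      exact (mul_ne_zero (sub_ne_zero.mpr ha) (sub_ne_zero.mpr hb)) hmn.symm
    set t : ℂ := (a - 1) / m with ht_def
    set v' : Fin 2 → ℂ := ![1, t] with hv'_def
    set v : Fin 2 → ℂ := P.mulVec v' with hv_def
    have hv0 : v ≠ 0 := by
      intro h
      have h2 : P⁻¹.mulVec v = 0 := by rw [h, mulVec_zero]
      rw [hv_def, mulVec_mulVec, hPP', one_mulVec] at h2
      have := congrFun h2 0
      simp [hv'_def] at this
    have hM'v : M'.mulVec v' = a • v' := by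
      have c0 : (M'.mulVec v') 0 = (a • v') 0 := by
        simp only [hv'_def, mulVec, dotProduct, Fin.sum_univ_two, Matrix.cons_val_zero,
          Matrix.cons_val_one, Matrix.head_cons, Pi.smul_apply, smul_eq_mul]
        rw [hM'00, ← hm_def, ht_def]
        field_simp
        ring
      have c1 : (M'.mulVec v') 1 = (a • v') 1 := by
        simp only [hv'_def, mulVec, dotProduct, Fin.sum_univ_two, Matrix.cons_val_zero,
          Matrix.cons_val_one, Matrix.head_cons, Pi.smul_apply, smul_eq_mul]
        rw [hM'10, hM'11]
        ring
      funext i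
      fin_cases i
      · exact c0
      · exact c1
    have hN'v : N'.mulVec v' = b • v' := by
      have c0 : (N'.mulVec v') 0 = (b • v') 0 := by
        simp only [hv'_def, mulVec, dotProduct, Fin.sum_univ_two, Matrix.cons_val_zero,
          Matrix.cons_val_one, Matrix.head_cons, Pi.smul_apply, smul_eq_mul]
        rw [hN'00, hN'01]
        ring
      have c1 : (N'.mulVec v') 1 = (b • v') 1 := by
        simp only [hv'_def, mulVec, dotProduct, Fin.sum_univ_two, Matrix.cons_val_zero,
          Matrix.cons_val_one, Matrix.head_cons, Pi.smul_apply, smul_eq_mul]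
        rw [hN'11, ← hn_def, ht_def]
        field_simp
        linear_combination hmn
      funext i
      fin_cases i
      · exact c0
      · exact c1
    have hMv : M.mulVec v = a • v := by
      rw [hv_def, mulVec_mulVec, hMP, ← mulVec_mulVec, hM'v, mulVec_smul]
    have hNv : N.mulVec v = b • v := by
      rw [hv_def, mulVec_mulVec, hNP, ← mulVec_mulVec, hN'v, mulVec_smul]
    refine ⟨v, hv0, ⟨a, hMv⟩, ⟨b, hNv⟩, ⟨a * b, ?_⟩⟩
    rw [← mulVec_mulVec, hNv, mulVec_smul, hMv, smul_smul, mul_comm]
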